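/- arXiv:1911.05049 — 5 statements merged into one kernel-verified Lean document; each statement's English description precedes it below -/
import Mathlib

section
/- Let n ≥ 1 and let S and T be standard Young tableaux of shape (n,n) with S ≤ T in the tableau-graph order. Let m be the column matching of T, and let w be any noncrossing perfect matching of {1,…,2n} whose set of arc-minima equals the set of first-row entries of S. Then w is reachable from m, i.e., w can be obtained from m by a finite (possibly empty) sequence of resolution steps. -/
/-- A standard Young tableau of shape `(n,n)`: a filling of a `2 × n` array with the
integers `1, …, 2n`, each used exactly once, strictly increasing along rows and columns. -/
structure SYT (n : ℕ) where
  entry : Fin 2 → Fin n → ℕ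
  mem_range : ∀ i j, entry i j ∈ Finset.Icc 1 (2 * n)
  inj : Function.Injective (fun p : Fin 2 × Fin n => entry p.1 p.2)
  surj : ∀ k ∈ Finset.Icc 1 (2 * n), ∃ i j, entry i j = k
  row_mono : ∀ i : Fin 2, StrictMono (entry i)
  col_lt : ∀ j : Fin n, entry 0 j < entry 1 j

/-- A perfect matching of `{1, …, 2n}`, with each arc recorded as an ordered pair
`(min, max)`. -/
structure Matching (n : ℕ) where
  arcs : Finset (ℕ × ℕ)
  arc_lt : ∀ p ∈ arcs, p.1 < p.2
  arc_mem : ∀ p ∈ arcs, p.1 ∈ Finset.Icc 1 (2 * n) ∧ p.2 ∈ Finset.Icc 1 (2 * n)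
  cover : ∀ k ∈ Finset.Icc 1 (2 * n), ∃! p : ℕ × ℕ, p ∈ arcs ∧ (k = p.1 ∨ k = p.2)

/-- Arcs `{a,c}` and `{b,d}` (each written `(min, max)`) cross when `a < b < c < d`. -/
def Crosses (p q : ℕ × ℕ) : Prop := p.1 < q.1 ∧ q.1 < p.2 ∧ p.2 < q.2

/-- A matching is noncrossing when no two of its arcs cross. -/
def Noncrossing {n : ℕ} (m : Matching n) : Prop :=
  ∀ p ∈ m.arcs, ∀ q ∈ m.arcs, ¬ Crosses p q

/-- The set of arc-minima (smaller endpoints of the arcs) of a matching. -/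
def arcMinima {n : ℕ} (m : Matching n) : Finset ℕ := m.arcs.image Prod.fst

/-- The set of entries of the first row of a tableau. -/
def firstRow {n : ℕ} (T : SYT n) : Finset ℕ := Finset.univ.image (T.entry 0)

/-- The arcs of the column matching of a tableau: the two entries of each column. -/
def columnArcs {n : ℕ} (T : SYT n) : Finset (ℕ × ℕ) :=
  Finset.univ.image (fun j : Fin n => (T.entry 0 j, T.entry 1 j))

/-- `ResPair m m₁ m₂` : `m` has a crossing pair of arcs `{a,c}, {b,d}` (`a<b<c<d`),
`m₁` is obtained by replacing them with `{a,b}, {c,d}`, and `m₂` by replacing them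
with `{a,d}, {b,c}`. -/
def ResPair {n : ℕ} (m m₁ m₂ : Matching n) : Prop :=
  ∃ a b c d : ℕ, a < b ∧ b < c ∧ c < d ∧ (a, c) ∈ m.arcs ∧ (b, d) ∈ m.arcs ∧
    m₁.arcs = (m.arcs \ {(a, c), (b, d)}) ∪ {(a, b), (c, d)} ∧
    m₂.arcs = (m.arcs \ {(a, c), (b, d)}) ∪ {(a, d), (b, c)}

/-- A single resolution step. -/
def ResStep {n : ℕ} (m m' : Matching n) : Prop :=
  ∃ m₁ m₂ : Matching n, ResPair m m₁ m₂ ∧ (m' = m₁ ∨ m' = m₂)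

/-- `w` is reachable from `m` by a finite (possibly empty) sequence of resolution steps. -/
def Reachable {n : ℕ} (m w : Matching n) : Prop := Relation.ReflTransGen ResStep m w

/-- Directed edge of the tableau graph: `T` is obtained from `S` by swapping `i` and
`i+1`, where `i` is in the bottom row of `S` and `i+1` is in the top row of `S`. -/
def Edge {n : ℕ} (S T : SYT n) : Prop :=
  ∃ i : ℕ, (∃ j : Fin n, S.entry 1 j = i) ∧ (∃ j : Fin n, S.entry 0 j = i + 1) ∧
    ∀ p q, T.entry p q =
      if S.entry p q = i then i + 1 else if S.entry p q = i + 1 then i else S.entry p q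

/-- The tableau-graph partial order: existence of a directed path. -/
def TabLE {n : ℕ} (S T : SYT n) : Prop := Relation.ReflTransGen Edge S T

section Part1
open Finset

variable {n : ℕ}

lemma mem_of_cover {m : Matching n} {p : ℕ × ℕ} (hp : p ∈ m.arcs) {k : ℕ}
    (hk : k = p.1 ∨ k = p.2) : k ∈ Finset.Icc 1 (2 * n) := by
  rcases hk with h | h <;> subst h
  · exact (m.arc_mem p hp).1
  · exact (m.arc_mem p hp).2

lemma covers_unique {m : Matching n} {p q : ℕ × ℕ} (hp : p ∈ m.arcs) (hq : q ∈ m.arcs)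
    {k : ℕ} (hkp : k = p.1 ∨ k = p.2) (hkq : k = q.1 ∨ k = q.2) : p = q :=
  (m.cover k (mem_of_cover hp hkp)).unique ⟨hp, hkp⟩ ⟨hq, hkq⟩

lemma mem_arcMinima {m : Matching n} {k : ℕ} :
    k ∈ arcMinima m ↔ ∃ p ∈ m.arcs, p.1 = k := by
  simp [arcMinima]

lemma snd_not_min {m : Matching n} {p : ℕ × ℕ} (hp : p ∈ m.arcs) : p.2 ∉ arcMinima m := by
  intro h
  rcases mem_arcMinima.1 h with ⟨q, hq, hq1⟩
  have hpq : p = q := covers_unique hp hq (Or.inr rfl) (Or.inl hq1.symm)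
  have h2' : p.2 = q.2 := by rw [hpq]
  have := m.arc_lt q hq
  omega

lemma exists_snd_of_not_min {m : Matching n} {k : ℕ} (hk : k ∈ Finset.Icc 1 (2 * n))
    (hkm : k ∉ arcMinima m) : ∃ p ∈ m.arcs, p.2 = k := by
  obtain ⟨p, ⟨hp, hcov⟩, -⟩ := m.cover k hk
  rcases hcov with h | h
  · exact absurd (mem_arcMinima.2 ⟨p, hp, h.symm⟩) hkm
  · exact ⟨p, hp, h.symm⟩

lemma exists_rewire (m : Matching n) {a b c d : ℕ} (hab : a < b) (hbc : b < c) (hcd : c < d)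
    (h1 : (a, c) ∈ m.arcs) (h2 : (b, d) ∈ m.arcs) (r s : ℕ × ℕ)
    (hr : r.1 < r.2) (hs : s.1 < s.2)
    (hmem : ∀ k : ℕ, (k = r.1 ∨ k = r.2 ∨ k = s.1 ∨ k = s.2) ↔ (k = a ∨ k = b ∨ k = c ∨ k = d))
    (hdisj : r.1 ≠ s.1 ∧ r.1 ≠ s.2 ∧ r.2 ≠ s.1 ∧ r.2 ≠ s.2) :
    ∃ m' : Matching n, m'.arcs = (m.arcs \ {(a, c), (b, d)}) ∪ {r, s} := by
  set A : Finset (ℕ × ℕ) := (m.arcs \ {(a, c), (b, d)}) ∪ {r, s} with hA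
  have hmemA : ∀ p : ℕ × ℕ, p ∈ A ↔ (p ∈ m.arcs ∧ p ≠ (a, c) ∧ p ≠ (b, d)) ∨ p = r ∨ p = s := by
    intro p
    simp [hA, Finset.mem_union, Finset.mem_sdiff, Finset.mem_insert, Finset.mem_singleton]
    tauto
  have habcd : ∀ k : ℕ, (k = a ∨ k = b ∨ k = c ∨ k = d) → k ∈ Finset.Icc 1 (2 * n) := by
    rintro k (rfl | rfl | rfl | rfl)
    · exact (m.arc_mem _ h1).1
    · exact (m.arc_mem _ h2).1
    · exact (m.arc_mem _ h1).2
    · exact (m.arc_mem _ h2).2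
  refine ⟨⟨A, ?_, ?_, ?_⟩, rfl⟩
  · -- arc_lt
    intro p hp
    rcases (hmemA p).1 hp with ⟨hpm, -, -⟩ | rfl | rfl
    · exact m.arc_lt p hpm
    · exact hr
    · exact hs
  · -- arc_mem
    intro p hp
    rcases (hmemA p).1 hp with ⟨hpm, -, -⟩ | rfl | rfl
    · exact m.arc_mem p hpm
    · exact ⟨habcd _ ((hmem p.1).1 (Or.inl rfl)), habcd _ ((hmem p.2).1 (Or.inr (Or.inl rfl)))⟩
    · exact ⟨habcd _ ((hmem p.1).1 (Or.inr (Or.inr (Or.inl rfl)))),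
        habcd _ ((hmem p.2).1 (Or.inr (Or.inr (Or.inr rfl))))⟩
  · -- cover
    intro k hk
    obtain ⟨p, ⟨hp, hkp⟩, hu⟩ := m.cover k hk
    have hnotboth : ¬ ((k = r.1 ∨ k = r.2) ∧ (k = s.1 ∨ k = s.2)) := by
      obtain ⟨d1, d2, d3, d4⟩ := hdisj
      rintro ⟨h1' | h1', h2' | h2'⟩ <;> omega
    by_cases hrem : p = (a, c) ∨ p = (b, d)
    · have hk4 : k = a ∨ k = b ∨ k = c ∨ k = d := by
        rcases hrem with rfl | rfl <;> rcases hkp with h | h <;> simp_all <;> tauto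
      have hkrs : k = r.1 ∨ k = r.2 ∨ k = s.1 ∨ k = s.2 := (hmem k).2 hk4
      have huniq : ∀ q : ℕ × ℕ, q ∈ A ∧ (k = q.1 ∨ k = q.2) → q = r ∨ q = s := by
        rintro q ⟨hqA, hkq⟩
        rcases (hmemA q).1 hqA with ⟨hqm, hne1, hne2⟩ | h | h
        · exfalso
          have := hu q ⟨hqm, hkq⟩
          rcases hrem with rfl | rfl
          · exact hne1 this
          · exact hne2 this
        · exact Or.inl h
        · exact Or.inr h
      obtain ⟨t, htrs, hkt⟩ : ∃ t : ℕ × ℕ, (t = r ∨ t = s) ∧ (k = t.1 ∨ k = t.2) := by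
        rcases hkrs with h | h | h | h
        exacts [⟨r, Or.inl rfl, Or.inl h⟩, ⟨r, Or.inl rfl, Or.inr h⟩,
          ⟨s, Or.inr rfl, Or.inl h⟩, ⟨s, Or.inr rfl, Or.inr h⟩]
      refine ⟨t, ⟨(hmemA t).2 (Or.inr htrs), hkt⟩, ?_⟩
      rintro q ⟨hqA, hkq⟩
      rcases htrs with rfl | rfl <;> rcases huniq q ⟨hqA, hkq⟩ with rfl | rfl
      · rfl
      · exact absurd ⟨hkt, hkq⟩ hnotboth
      · exact absurd ⟨hkq, hkt⟩ hnotboth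
      · rfl
    · push_neg at hrem
      have hk4 : ¬ (k = a ∨ k = b ∨ k = c ∨ k = d) := by
        rintro (h | h | h | h)
        · exact hrem.1 (hu (a, c) ⟨h1, Or.inl h⟩).symm
        · exact hrem.2 (hu (b, d) ⟨h2, Or.inl h⟩).symm
        · exact hrem.1 (hu (a, c) ⟨h1, Or.inr h⟩).symm
        · exact hrem.2 (hu (b, d) ⟨h2, Or.inr h⟩).symm
      refine ⟨p, ⟨(hmemA p).2 (Or.inl ⟨hp, hrem.1, hrem.2⟩), hkp⟩, ?_⟩
      rintro q ⟨hqA, hkq⟩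
      rcases (hmemA q).1 hqA with ⟨hqm, -, -⟩ | rfl | rfl
      · exact hu q ⟨hqm, hkq⟩
      · exact absurd ((hmem k).1 (by tauto)) hk4
      · exact absurd ((hmem k).1 (by tauto)) hk4

lemma resSteps_of_crossing (m : Matching n) {a b c d : ℕ} (hab : a < b) (hbc : b < c)
    (hcd : c < d) (h1 : (a, c) ∈ m.arcs) (h2 : (b, d) ∈ m.arcs) :
    (∃ m₁ : Matching n,
        m₁.arcs = (m.arcs \ {(a, c), (b, d)}) ∪ {(a, b), (c, d)} ∧ ResStep m m₁) ∧
    (∃ m₂ : Matching n,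
        m₂.arcs = (m.arcs \ {(a, c), (b, d)}) ∪ {(a, d), (b, c)} ∧ ResStep m m₂) := by
  obtain ⟨m₁, hm₁⟩ := exists_rewire m hab hbc hcd h1 h2 (a, b) (c, d) hab hcd
    (by intro k; dsimp; constructor <;> rintro (h | h | h | h) <;> tauto)
    (by dsimp; omega)
  obtain ⟨m₂, hm₂⟩ := exists_rewire m hab hbc hcd h1 h2 (a, d) (b, c) (by dsimp; omega)
    (by dsimp; omega)
    (by intro k; dsimp; constructor <;> rintro (h | h | h | h) <;> tauto)
    (by dsimp; omega)
  have hrp : ResPair m m₁ m₂ := ⟨a, b, c, d, hab, hbc, hcd, h1, h2, hm₁, hm₂⟩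
  exact ⟨⟨m₁, hm₁, m₁, m₂, hrp, Or.inl rfl⟩, ⟨m₂, hm₂, m₁, m₂, hrp, Or.inr rfl⟩⟩

lemma minima_option2 {m m₂ : Matching n} {a b c d : ℕ} (h1 : (a, c) ∈ m.arcs)
    (h2 : (b, d) ∈ m.arcs)
    (hm₂ : m₂.arcs = (m.arcs \ {(a, c), (b, d)}) ∪ {(a, d), (b, c)}) :
    arcMinima m₂ = arcMinima m := by
  ext k
  simp only [arcMinima, Finset.mem_image, hm₂, Finset.mem_union, Finset.mem_sdiff,
    Finset.mem_insert, Finset.mem_singleton]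
  constructor
  · rintro ⟨p, (⟨hp, -⟩ | rfl | rfl), rfl⟩
    · exact ⟨p, hp, rfl⟩
    · exact ⟨(a, c), h1, rfl⟩
    · exact ⟨(b, d), h2, rfl⟩
  · rintro ⟨p, hp, rfl⟩
    by_cases hpac : p = (a, c)
    · subst hpac; exact ⟨(a, d), Or.inr (Or.inl rfl), rfl⟩
    by_cases hpbd : p = (b, d)
    · subst hpbd; exact ⟨(b, c), Or.inr (Or.inr rfl), rfl⟩
    · exact ⟨p, Or.inl ⟨hp, by tauto⟩, rfl⟩

end Part1
section Part2
open Finset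

variable {n : ℕ}

noncomputable def psi (m : Matching n) : ℕ := ∑ p ∈ m.arcs, (p.2 - p.1) ^ 2

lemma psi_le (m : Matching n) : psi m ≤ 2 * n * (2 * n) ^ 2 := by
  have hcard : m.arcs.card ≤ 2 * n := by
    have h := Finset.card_le_card_of_injOn Prod.fst (fun p hp => (m.arc_mem p hp).1)
      (fun p hp q hq h => covers_unique hp hq (Or.inl rfl) (Or.inl h))
    simpa using h
  calc psi m ≤ ∑ _p ∈ m.arcs, (2 * n) ^ 2 := by
        refine Finset.sum_le_sum (fun p hp => ?_)
        have h2 := (m.arc_mem p hp).2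
        simp only [Finset.mem_Icc] at h2
        exact Nat.pow_le_pow_left (by omega) 2
    _ = m.arcs.card * (2 * n) ^ 2 := by rw [Finset.sum_const, smul_eq_mul]
    _ ≤ 2 * n * (2 * n) ^ 2 := Nat.mul_le_mul_right _ hcard

lemma psi_lt_option2 {m m₂ : Matching n} {a b c d : ℕ} (hab : a < b) (hbc : b < c)
    (hcd : c < d) (h1 : (a, c) ∈ m.arcs) (h2 : (b, d) ∈ m.arcs)
    (hm₂ : m₂.arcs = (m.arcs \ {(a, c), (b, d)}) ∪ {(a, d), (b, c)}) :
    psi m < psi m₂ := by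
  have had : (a, d) ∉ m.arcs := by
    intro h
    have := covers_unique h1 h (Or.inl rfl) (Or.inl rfl)
    simp only [Prod.mk.injEq] at this
    omega
  have hbcm : (b, c) ∉ m.arcs := by
    intro h
    have := covers_unique h2 h (Or.inl rfl) (Or.inl rfl)
    simp only [Prod.mk.injEq] at this
    omega
  have hsub : ({(a, c), (b, d)} : Finset (ℕ × ℕ)) ⊆ m.arcs := by
    intro p hp
    simp only [Finset.mem_insert, Finset.mem_singleton] at hp
    rcases hp with rfl | rfl
    · exact h1
    · exact h2
  have hkey : m.arcs = (m.arcs \ {(a, c), (b, d)}) ∪ {(a, c), (b, d)} :=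
    (Finset.sdiff_union_of_subset hsub).symm
  have hdis1 : Disjoint (m.arcs \ {(a, c), (b, d)}) ({(a, c), (b, d)} : Finset (ℕ × ℕ)) :=
    Finset.sdiff_disjoint
  have hdis2 : Disjoint (m.arcs \ {(a, c), (b, d)}) ({(a, d), (b, c)} : Finset (ℕ × ℕ)) := by
    rw [Finset.disjoint_right]
    intro p hp hps
    simp only [Finset.mem_insert, Finset.mem_singleton] at hp
    rcases hp with rfl | rfl
    · exact had (Finset.mem_sdiff.1 hps).1
    · exact hbcm (Finset.mem_sdiff.1 hps).1
  have hne1 : ((a, c) : ℕ × ℕ) ≠ (b, d) := by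
    intro h; simp only [Prod.mk.injEq] at h; omega
  have hne2 : ((a, d) : ℕ × ℕ) ≠ (b, c) := by
    intro h; simp only [Prod.mk.injEq] at h; omega
  have e1 : psi m = (∑ p ∈ m.arcs \ {(a, c), (b, d)}, (p.2 - p.1) ^ 2)
      + ((c - a) ^ 2 + (d - b) ^ 2) := by
    rw [psi]
    conv_lhs => rw [hkey]
    rw [Finset.sum_union hdis1, Finset.sum_pair hne1]
  have e2 : psi m₂ = (∑ p ∈ m.arcs \ {(a, c), (b, d)}, (p.2 - p.1) ^ 2)
      + ((d - a) ^ 2 + (c - b) ^ 2) := by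
    rw [psi, hm₂, Finset.sum_union hdis2, Finset.sum_pair hne2]
  rw [e1, e2]
  have harith : (c - a) ^ 2 + (d - b) ^ 2 < (d - a) ^ 2 + (c - b) ^ 2 := by
    obtain ⟨u, hu⟩ := Nat.exists_eq_add_of_lt hab
    obtain ⟨v, hv⟩ := Nat.exists_eq_add_of_lt hbc
    obtain ⟨x, hx⟩ := Nat.exists_eq_add_of_lt hcd
    have ea : c - a = u + v + 2 := by omega
    have eb : d - b = v + x + 2 := by omega
    have ec : d - a = u + v + x + 3 := by omega
    have ed : c - b = v + 1 := by omega
    rw [ea, eb, ec, ed]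
    nlinarith [Nat.zero_le u, Nat.zero_le x]
  omega

end Part2
section Part3
open Finset

variable {n : ℕ}

lemma fst_injOn {m : Matching n} {s : Finset (ℕ × ℕ)} (hs : s ⊆ m.arcs) :
    Set.InjOn Prod.fst (s : Set (ℕ × ℕ)) := fun p hp q hq h =>
  covers_unique (hs hp) (hs hq) (Or.inl rfl) (Or.inl h)

lemma snd_injOn {m : Matching n} {s : Finset (ℕ × ℕ)} (hs : s ⊆ m.arcs) :
    Set.InjOn Prod.snd (s : Set (ℕ × ℕ)) := fun p hp q hq h =>
  covers_unique (hs hp) (hs hq) (Or.inr rfl) (Or.inr h)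

lemma nc_balance {w : Matching n} (hw : Noncrossing w) {x y : ℕ} (hxy : (x, y) ∈ w.arcs) :
    (arcMinima w ∩ Finset.Ioo x y).card
      = ((Finset.Icc 1 (2 * n) \ arcMinima w) ∩ Finset.Ioo x y).card := by
  have hxly : x < y := w.arc_lt _ hxy
  set inner := w.arcs.filter (fun p => x < p.1 ∧ p.2 < y) with hinner
  have hinner_sub : inner ⊆ w.arcs := Finset.filter_subset _ _
  have claim1 : arcMinima w ∩ Finset.Ioo x y = inner.image Prod.fst := by
    ext k
    simp only [Finset.mem_inter, Finset.mem_Ioo, Finset.mem_image, hinner, Finset.mem_filter]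
    constructor
    · rintro ⟨hkM, hx, hy⟩
      rcases mem_arcMinima.1 hkM with ⟨p, hp, hp1⟩
      refine ⟨p, ⟨hp, by omega, ?_⟩, hp1⟩
      have hne : p.2 ≠ y := by
        intro h
        have hpe : p = (x, y) := covers_unique hp hxy (Or.inr h.symm) (Or.inr rfl)
        rw [hpe] at hp1
        simp at hp1
        omega
      have hnlt : ¬ y < p.2 := by
        intro h
        exact hw (x, y) hxy p hp ⟨by omega, by omega, h⟩
      omega
    · rintro ⟨p, ⟨hp, hx1, hy2⟩, rfl⟩
      have := w.arc_lt p hp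
      exact ⟨mem_arcMinima.2 ⟨p, hp, rfl⟩, hx1, by omega⟩
  have claim2 : (Finset.Icc 1 (2 * n) \ arcMinima w) ∩ Finset.Ioo x y
      = inner.image Prod.snd := by
    ext k
    simp only [Finset.mem_inter, Finset.mem_sdiff, Finset.mem_Ioo, Finset.mem_image, hinner,
      Finset.mem_filter]
    constructor
    · rintro ⟨⟨hkI, hkM⟩, hx, hy⟩
      obtain ⟨p, hp, hp2⟩ := exists_snd_of_not_min hkI hkM
      refine ⟨p, ⟨hp, ?_, by omega⟩, hp2⟩
      have hne : p.1 ≠ x := by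
        intro h
        have hpe : p = (x, y) := covers_unique hp hxy (Or.inl h.symm) (Or.inl rfl)
        rw [hpe] at hp2
        simp at hp2
        omega
      have hnlt : ¬ p.1 < x := by
        intro h
        exact hw p hp (x, y) hxy ⟨h, by omega, by omega⟩
      omega
    · rintro ⟨p, ⟨hp, hx1, hy2⟩, rfl⟩
      have := w.arc_lt p hp
      exact ⟨⟨(w.arc_mem p hp).2, snd_not_min hp⟩, by omega, hy2⟩
  rw [claim1, claim2, Finset.card_image_of_injOn (fst_injOn hinner_sub),
    Finset.card_image_of_injOn (snd_injOn hinner_sub)]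

lemma nc_no_early {w : Matching n} (hw : Noncrossing w) {x y z : ℕ} (hxy : (x, y) ∈ w.arcs)
    (hz1 : x < z) (hz2 : z < y) (hzI : z ∈ Finset.Icc 1 (2 * n)) (hzM : z ∉ arcMinima w)
    (hbal : (arcMinima w ∩ Finset.Ioo x z).card
      = ((Finset.Icc 1 (2 * n) \ arcMinima w) ∩ Finset.Ioo x z).card) : False := by
  set innerZ := w.arcs.filter (fun p => x < p.1 ∧ p.2 < z) with hiz
  have hsub : innerZ ⊆ w.arcs := Finset.filter_subset _ _
  have step1 : (Finset.Icc 1 (2 * n) \ arcMinima w) ∩ Finset.Ioo x z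
      = innerZ.image Prod.snd := by
    ext k
    simp only [Finset.mem_inter, Finset.mem_sdiff, Finset.mem_Ioo, Finset.mem_image, hiz,
      Finset.mem_filter]
    constructor
    · rintro ⟨⟨hkI, hkM⟩, hx, hz'⟩
      obtain ⟨p, hp, hp2⟩ := exists_snd_of_not_min hkI hkM
      refine ⟨p, ⟨hp, ?_, by omega⟩, hp2⟩
      have hne : p.1 ≠ x := by
        intro h
        have hpe : p = (x, y) := covers_unique hp hxy (Or.inl h.symm) (Or.inl rfl)
        rw [hpe] at hp2
        simp at hp2
        omega
      have hnlt : ¬ p.1 < x := by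
        intro h
        exact hw p hp (x, y) hxy ⟨h, by omega, by omega⟩
      omega
    · rintro ⟨p, ⟨hp, hx1, hz'⟩, rfl⟩
      have := w.arc_lt p hp
      exact ⟨⟨(w.arc_mem p hp).2, snd_not_min hp⟩, by omega, hz'⟩
  have step2 : innerZ.image Prod.fst ⊆ arcMinima w ∩ Finset.Ioo x z := by
    intro k hk
    obtain ⟨p, hp', rfl⟩ := Finset.mem_image.1 hk
    obtain ⟨hp, hx1, hz'⟩ := Finset.mem_filter.1 hp'
    have := w.arc_lt p hp
    exact Finset.mem_inter.2 ⟨mem_arcMinima.2 ⟨p, hp, rfl⟩, Finset.mem_Ioo.2 ⟨hx1, by omega⟩⟩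
  have hcards : (arcMinima w ∩ Finset.Ioo x z).card ≤ (innerZ.image Prod.fst).card := by
    rw [Finset.card_image_of_injOn (fst_injOn hsub), hbal, step1,
      Finset.card_image_of_injOn (snd_injOn hsub)]
  have hEq : innerZ.image Prod.fst = arcMinima w ∩ Finset.Ioo x z :=
    Finset.eq_of_subset_of_card_le step2 hcards
  obtain ⟨q, hq, hq2⟩ := exists_snd_of_not_min hzI hzM
  have hq1x : q.1 ≠ x := by
    intro h
    have hqe : q = (x, y) := covers_unique hq hxy (Or.inl h.symm) (Or.inl rfl)
    rw [hqe] at hq2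
    simp at hq2
    omega
  have hq1gt : ¬ q.1 < x := by
    intro h
    exact hw q hq (x, y) hxy ⟨h, by omega, by omega⟩
  have hq1mem : q.1 ∈ arcMinima w ∩ Finset.Ioo x z :=
    Finset.mem_inter.2 ⟨mem_arcMinima.2 ⟨q, hq, rfl⟩,
      Finset.mem_Ioo.2 ⟨by omega, by have := w.arc_lt q hq; omega⟩⟩
  rw [← hEq] at hq1mem
  obtain ⟨p, hp', hp1⟩ := Finset.mem_image.1 hq1mem
  obtain ⟨hp, hx1, hz'⟩ := Finset.mem_filter.1 hp'
  have hpq : p = q := covers_unique hp hq (Or.inl hp1.symm) (Or.inl rfl)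
  rw [hpq, hq2] at hz'
  omega

lemma nc_partner_eq {w w' : Matching n} (hw : Noncrossing w) (hw' : Noncrossing w')
    (hM : arcMinima w = arcMinima w') {x y y' : ℕ} (hxy : (x, y) ∈ w.arcs)
    (hxy' : (x, y') ∈ w'.arcs) : y = y' := by
  rcases lt_trichotomy y y' with h | h | h
  · exfalso
    refine nc_no_early hw' hxy' (w.arc_lt _ hxy) h (w.arc_mem _ hxy).2
      (by rw [← hM]; exact snd_not_min hxy) ?_
    have := nc_balance hw hxy
    rwa [hM] at this
  · exact h
  · exfalso
    refine nc_no_early hw hxy (w'.arc_lt _ hxy') h (w'.arc_mem _ hxy').2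
      (by rw [hM]; exact snd_not_min hxy') ?_
    have := nc_balance hw' hxy'
    rwa [← hM] at this

lemma nc_arcs_subset {w w' : Matching n} (hw : Noncrossing w) (hw' : Noncrossing w')
    (hM : arcMinima w = arcMinima w') : w.arcs ⊆ w'.arcs := by
  intro p hp
  have hp1 : p.1 ∈ arcMinima w' := hM ▸ mem_arcMinima.2 ⟨p, hp, rfl⟩
  obtain ⟨q, hq, hq1⟩ := mem_arcMinima.1 hp1
  have hxyw : (p.1, p.2) ∈ w.arcs := by rwa [Prod.mk.eta]
  have hxyw' : (p.1, q.2) ∈ w'.arcs := by rw [← hq1, Prod.mk.eta]; exact hq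
  have h2 : p.2 = q.2 := nc_partner_eq hw hw' hM hxyw hxyw'
  have hpq : p = q := Prod.ext_iff.2 ⟨hq1.symm, h2⟩
  rwa [hpq]

lemma matching_ext {m m' : Matching n} (h : m.arcs = m'.arcs) : m = m' := by
  cases m
  cases m'
  simp only at h
  subst h
  rfl

lemma nc_eq {w w' : Matching n} (hw : Noncrossing w) (hw' : Noncrossing w')
    (hM : arcMinima w = arcMinima w') : w = w' :=
  matching_ext (Finset.Subset.antisymm (nc_arcs_subset hw hw' hM)
    (nc_arcs_subset hw' hw hM.symm))

end Part3
section Part4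
open Finset

variable {n : ℕ}

lemma crossing_step {m : Matching n} (hnc : ¬ Noncrossing m) :
    ∃ m₂ : Matching n, ResStep m m₂ ∧ arcMinima m₂ = arcMinima m ∧ psi m < psi m₂ := by
  rw [Noncrossing] at hnc
  push_neg at hnc
  obtain ⟨p, hp, q, hq, h1', h2', h3'⟩ := hnc
  have hpmem : (p.1, p.2) ∈ m.arcs := by rwa [Prod.mk.eta]
  have hqmem : (q.1, q.2) ∈ m.arcs := by rwa [Prod.mk.eta]
  obtain ⟨m₂, hm₂, hstep⟩ := (resSteps_of_crossing m h1' h2' h3' hpmem hqmem).2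
  exact ⟨m₂, hstep, minima_option2 hpmem hqmem hm₂,
    psi_lt_option2 h1' h2' h3' hpmem hqmem hm₂⟩

lemma reach_nc_aux : ∀ (k : ℕ) (m : Matching n), 2 * n * (2 * n) ^ 2 ≤ psi m + k →
    ∀ w : Matching n, Noncrossing w → arcMinima m = arcMinima w → Reachable m w := by
  intro k
  induction k with
  | zero =>
    intro m hk w hw hM'
    by_cases hnc : Noncrossing m
    · rw [nc_eq hnc hw hM']; exact Relation.ReflTransGen.refl
    · exfalso
      obtain ⟨m₂, -, -, hlt⟩ := crossing_step hnc
      have := psi_le m₂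
      omega
  | succ k ih =>
    intro m hk w hw hM'
    by_cases hnc : Noncrossing m
    · rw [nc_eq hnc hw hM']; exact Relation.ReflTransGen.refl
    · obtain ⟨m₂, hstep, hmin, hlt⟩ := crossing_step hnc
      exact Relation.ReflTransGen.head hstep
        (ih m₂ (by omega) w hw (by rw [hmin]; exact hM'))

lemma reach_nc {m w : Matching n} (hw : Noncrossing w) (hM : arcMinima m = arcMinima w) :
    Reachable m w :=
  reach_nc_aux (2 * n * (2 * n) ^ 2) m (by omega) w hw hM

end Part4
section Part5
open Finset

variable {n : ℕ}

lemma syt_inj {b : SYT n} {i1 i2 : Fin 2} {j1 j2 : Fin n}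
    (h : b.entry i1 j1 = b.entry i2 j2) : i1 = i2 ∧ j1 = j2 := by
  have h2 := b.inj (a₁ := (i1, j1)) (a₂ := (i2, j2)) h
  exact ⟨congrArg Prod.fst h2, congrArg Prod.snd h2⟩

def colMatching (T : SYT n) : Matching n where
  arcs := columnArcs T
  arc_lt := by
    intro p hp
    simp only [columnArcs, Finset.mem_image, Finset.mem_univ, true_and] at hp
    obtain ⟨j, rfl⟩ := hp
    exact T.col_lt j
  arc_mem := by
    intro p hp
    simp only [columnArcs, Finset.mem_image, Finset.mem_univ, true_and] at hp
    obtain ⟨j, rfl⟩ := hp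
    exact ⟨T.mem_range 0 j, T.mem_range 1 j⟩
  cover := by
    intro k hk
    obtain ⟨i, j, hij⟩ := T.surj k hk
    refine ⟨(T.entry 0 j, T.entry 1 j), ⟨?_, ?_⟩, ?_⟩
    · simp only [columnArcs, Finset.mem_image, Finset.mem_univ, true_and]
      exact ⟨j, rfl⟩
    · fin_cases i
      · exact Or.inl hij.symm
      · exact Or.inr hij.symm
    · rintro q ⟨hq, hkq⟩
      simp only [columnArcs, Finset.mem_image, Finset.mem_univ, true_and] at hq
      obtain ⟨j2, rfl⟩ := hq
      have hj2 : j2 = j := by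
        rcases hkq with h | h
        · exact (syt_inj (h.symm.trans hij.symm : T.entry 0 j2 = T.entry i j)).2
        · exact (syt_inj (h.symm.trans hij.symm : T.entry 1 j2 = T.entry i j)).2
      rw [hj2]

lemma arcs_colMatching (T : SYT n) : (colMatching T).arcs = columnArcs T := rfl

lemma minima_colMatching (T : SYT n) : arcMinima (colMatching T) = firstRow T := by
  rw [arcMinima, arcs_colMatching, columnArcs, Finset.image_image, firstRow]
  rfl

lemma edge_arcs {b T : SYT n} (h : Edge b T) :
    ∃ a i d : ℕ, a < i ∧ i + 1 < d ∧ (a, i + 1) ∈ columnArcs T ∧ (i, d) ∈ columnArcs T ∧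
      columnArcs b = (columnArcs T \ {(a, i + 1), (i, d)}) ∪ {(a, i), (i + 1, d)} := by
  obtain ⟨i, ⟨j', hj'⟩, ⟨j, hj⟩, hT⟩ := h
  have hjj' : j ≠ j' := by
    intro h
    subst h
    have h1 := b.col_lt j
    rw [hj, hj'] at h1
    omega
  set a := b.entry 0 j' with ha
  set d := b.entry 1 j with hd
  have hai : a < i := by
    have h1 := b.col_lt j'
    rw [hj'] at h1
    exact h1
  have hdi : i + 1 < d := by
    have h1 := b.col_lt j
    rw [hj] at h1
    exact h1
  have hT0j : T.entry 0 j = i := by rw [hT 0 j, hj]; simp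
  have hT1j : T.entry 1 j = d := by
    rw [hT 1 j, ← hd]
    have h1 : d ≠ i := by omega
    have h2 : d ≠ i + 1 := by omega
    simp [h1, h2]
  have hT0j' : T.entry 0 j' = a := by
    rw [hT 0 j', ← ha]
    have h1 : a ≠ i := by omega
    have h2 : a ≠ i + 1 := by omega
    simp [h1, h2]
  have hT1j' : T.entry 1 j' = i + 1 := by rw [hT 1 j', hj']; simp
  have hother : ∀ (p : Fin 2) (q : Fin n), q ≠ j → q ≠ j' →
      T.entry p q = b.entry p q := by
    intro p q hqj hqj'
    rw [hT p q]
    have h1 : b.entry p q ≠ i := by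
      intro h
      exact hqj' (syt_inj (h.trans hj'.symm : b.entry p q = b.entry 1 j')).2
    have h2 : b.entry p q ≠ i + 1 := by
      intro h
      exact hqj (syt_inj (h.trans hj.symm : b.entry p q = b.entry 0 j)).2
    simp [h1, h2]
  refine ⟨a, i, d, hai, hdi, ?_, ?_, ?_⟩
  · simp only [columnArcs, Finset.mem_image, Finset.mem_univ, true_and]
    exact ⟨j', by rw [hT0j', hT1j']⟩
  · simp only [columnArcs, Finset.mem_image, Finset.mem_univ, true_and]
    exact ⟨j, by rw [hT0j, hT1j]⟩
  · ext p
    simp only [columnArcs, Finset.mem_union, Finset.mem_sdiff, Finset.mem_insert,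
      Finset.mem_singleton, Finset.mem_image, Finset.mem_univ, true_and]
    constructor
    · rintro ⟨q, rfl⟩
      by_cases hq1 : q = j
      · subst hq1
        right
        right
        rw [hj, ← hd]
      by_cases hq2 : q = j'
      · subst hq2
        right
        left
        rw [hj', ← ha]
      · left
        refine ⟨⟨q, by rw [hother 0 q hq1 hq2, hother 1 q hq1 hq2]⟩, ?_⟩
        rintro (h | h)
        · have h2 : b.entry 1 q = i + 1 := by
            have := congrArg Prod.snd h
            simpa using this
          have := syt_inj (h2.trans hj.symm : b.entry 1 q = b.entry 0 j)
          simp at this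
        · have h2 : b.entry 0 q = i := by
            have := congrArg Prod.fst h
            simpa using this
          have := syt_inj (h2.trans hj'.symm : b.entry 0 q = b.entry 1 j')
          simp at this
    · rintro (⟨⟨q, rfl⟩, hnot⟩ | h | h)
      · by_cases hq1 : q = j
        · subst hq1
          exact absurd (Or.inr (by rw [hT0j, hT1j])) hnot
        by_cases hq2 : q = j'
        · subst hq2
          exact absurd (Or.inl (by rw [hT0j', hT1j'])) hnot
        · exact ⟨q, by rw [hother 0 q hq1 hq2, hother 1 q hq1 hq2]⟩
      · exact ⟨j', by rw [h, ← ha, hj']⟩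
      · exact ⟨j, by rw [h, hj, ← hd]⟩

lemma step_tab {b T : SYT n} (hE : Edge b T) (m : Matching n)
    (hm : m.arcs = columnArcs T) : ResStep m (colMatching b) := by
  obtain ⟨a, i, d, hai, hid, hmem1, hmem2, harcs⟩ := edge_arcs hE
  have h1 : (a, i + 1) ∈ m.arcs := by rw [hm]; exact hmem1
  have h2 : (i, d) ∈ m.arcs := by rw [hm]; exact hmem2
  obtain ⟨⟨m₁, hm₁, hstep⟩, -⟩ :=
    resSteps_of_crossing m hai (Nat.lt_succ_self i) hid h1 h2
  have hcb : colMatching b = m₁ := by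
    apply matching_ext
    rw [arcs_colMatching, hm₁, hm, harcs]
  rw [hcb]
  exact hstep

end Part5
/-- If `S ≤ T` in the tableau-graph order, `m` is the column matching of `T`, and `w`
is a noncrossing perfect matching whose arc-minima are the first-row entries of `S`,
then `w` is reachable from `m` by resolution steps. -/
theorem stmt0 (n : ℕ) (hn : 1 ≤ n) (S T : SYT n) (hST : TabLE S T)
    (m : Matching n) (hm : m.arcs = columnArcs T)
    (w : Matching n) (hw : Noncrossing w) (hmin : arcMinima w = firstRow S) :
    Reachable m w := by
  induction hST generalizing m with
  | refl =>
    apply reach_nc hw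
    have hms : m = colMatching S := matching_ext (by rw [hm, arcs_colMatching])
    rw [hms, minima_colMatching, hmin]
  | @tail b T' hSb hE ih =>
    exact Relation.ReflTransGen.head (step_tab hE m hm) (ih (colMatching b) rfl)
end

section
/- Let n ≥ 1 and let m' be a perfect matching of {1,…,2n} obtained from a perfect matching m by a single resolution step (i.e., a crossing pair of arcs {a,c},{b,d} with a<b<c<d of m is replaced either by {a,b},{c,d} or by {a,d},{b,c}, all other arcs unchanged). Then the number of crossing pairs of arcs of m' is strictly smaller than the number of crossing pairs of arcs of m. -/
instance (p q : ℕ × ℕ) : Decidable (Crosses p q) := by unfold Crosses; infer_instance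

/-- The number of (unordered) crossing pairs of arcs of a matching: since each arc is
written `(min, max)` and `Crosses p q` forces `p.1 < q.1`, each unordered crossing
pair is counted exactly once. -/
def crossNum {n : ℕ} (m : Matching n) : ℕ :=
  ((m.arcs ×ˢ m.arcs).filter (fun pq : (ℕ × ℕ) × (ℕ × ℕ) => Crosses pq.1 pq.2)).card

private def fcr (s t : ℕ × ℕ) : ℕ := if Crosses s t then 1 else 0

private lemma key_cr (x y a b c d : ℕ) (hxy : x < y) (hab : a < b) (hbc : b < c) (hcd : c < d)
    (h1 : x ≠ a) (h2 : x ≠ b) (h3 : x ≠ c) (h4 : x ≠ d)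
    (h5 : y ≠ a) (h6 : y ≠ b) (h7 : y ≠ c) (h8 : y ≠ d)
    (p' q' : ℕ × ℕ) (hpq' : (p' = (a,b) ∧ q' = (c,d)) ∨ (p' = (a,d) ∧ q' = (b,c))) :
    fcr (x,y) p' + fcr p' (x,y) + fcr (x,y) q' + fcr q' (x,y) ≤
    fcr (x,y) (a,c) + fcr (a,c) (x,y) + fcr (x,y) (b,d) + fcr (b,d) (x,y) := by
  rcases hpq' with ⟨h, h'⟩ | ⟨h, h'⟩ <;> subst h <;> subst h' <;>
    simp only [fcr] <;> split_ifs <;> simp only [Crosses] at * <;> omega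

private lemma expand_cr (u v : ℕ × ℕ) (R : Finset (ℕ × ℕ)) (huv : u ≠ v)
    (hu : u ∉ R) (hv : v ∉ R) :
    ∑ s ∈ insert u (insert v R), ∑ t ∈ insert u (insert v R), fcr s t
      = fcr u u + fcr u v + fcr v u + fcr v v
        + ∑ t ∈ R, (fcr u t + fcr t u + fcr v t + fcr t v)
        + ∑ s ∈ R, ∑ t ∈ R, fcr s t := by
  have hu' : u ∉ insert v R := by simp [huv, hu]
  have inner : ∀ s, ∑ t ∈ insert u (insert v R), fcr s t
      = fcr s u + fcr s v + ∑ t ∈ R, fcr s t := by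
    intro s
    rw [Finset.sum_insert hu', Finset.sum_insert hv]
    ring
  rw [Finset.sum_insert hu', Finset.sum_insert hv]
  simp only [inner, Finset.sum_add_distrib]
  ring

private lemma dec_cr {n : ℕ} (m m' : Matching n) (a b c d : ℕ)
    (hab : a < b) (hbc : b < c) (hcd : c < d)
    (hac : (a,c) ∈ m.arcs) (hbd : (b,d) ∈ m.arcs)
    (p' q' : ℕ × ℕ)
    (hpq' : (p' = (a,b) ∧ q' = (c,d)) ∨ (p' = (a,d) ∧ q' = (b,c)))
    (hm' : m'.arcs = (m.arcs \ {(a,c),(b,d)}) ∪ {p', q'}) :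
    crossNum m' < crossNum m := by
  have share : ∀ r ∈ m.arcs, ∀ s ∈ m.arcs, ∀ k : ℕ,
      (k = r.1 ∨ k = r.2) → (k = s.1 ∨ k = s.2) → r = s := by
    intro r hr s hs k hkr hks
    have hk : k ∈ Finset.Icc 1 (2*n) := by
      rcases hkr with h | h <;> subst h
      · exact (m.arc_mem r hr).1
      · exact (m.arc_mem r hr).2
    obtain ⟨u, -, hu⟩ := m.cover k hk
    exact (hu r ⟨hr, hkr⟩).trans (hu s ⟨hs, hks⟩).symm
  classical
  have hp'nm : p' ∉ m.arcs := by
    rcases hpq' with ⟨h, -⟩ | ⟨h, -⟩ <;> subst h <;> intro hmem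
    · have := share _ hmem _ hac a (Or.inl rfl) (Or.inl rfl)
      simp [Prod.ext_iff] at this; omega
    · have := share _ hmem _ hac a (Or.inl rfl) (Or.inl rfl)
      simp [Prod.ext_iff] at this; omega
  have hq'nm : q' ∉ m.arcs := by
    rcases hpq' with ⟨-, h⟩ | ⟨-, h⟩ <;> subst h <;> intro hmem
    · have := share _ hmem _ hac c (Or.inl rfl) (Or.inr rfl)
      simp [Prod.ext_iff] at this; omega
    · have := share _ hmem _ hbd b (Or.inl rfl) (Or.inl rfl)
      simp [Prod.ext_iff] at this; omega
  have hp'q' : p' ≠ q' := by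
    rcases hpq' with ⟨h, h'⟩ | ⟨h, h'⟩ <;> subst h <;> subst h' <;>
      simp [Prod.ext_iff] <;> omega
  have hpq : ((a,c) : ℕ × ℕ) ≠ (b,d) := by simp [Prod.ext_iff]; omega
  set R : Finset (ℕ×ℕ) := m.arcs \ {(a,c), (b,d)} with hR
  have hRsub : R ⊆ m.arcs := Finset.sdiff_subset
  have hpR : ((a,c) : ℕ × ℕ) ∉ R := by simp [hR]
  have hqR : ((b,d) : ℕ × ℕ) ∉ R := by simp [hR]
  have hp'R : p' ∉ R := fun h => hp'nm (hRsub h)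
  have hq'R : q' ∉ R := fun h => hq'nm (hRsub h)
  have hA : m.arcs = insert (a,c) (insert (b,d) R) := by
    ext r
    simp only [hR, Finset.mem_insert, Finset.mem_sdiff, Finset.mem_singleton]
    constructor
    · intro h
      by_cases h1 : r = (a,c)
      · tauto
      · by_cases h2 : r = (b,d) <;> tauto
    · rintro (rfl | rfl | ⟨h, -⟩)
      · exact hac
      · exact hbd
      · exact h
  have hA' : m'.arcs = insert p' (insert q' R) := by
    rw [hm']
    ext r
    simp only [hR, Finset.mem_union, Finset.mem_insert, Finset.mem_sdiff,
      Finset.mem_singleton]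
    tauto
  have hcn : ∀ (mm : Matching n), crossNum mm = ∑ s ∈ mm.arcs, ∑ t ∈ mm.arcs, fcr s t := by
    intro mm
    rw [crossNum, Finset.card_filter, Finset.sum_product]
    rfl
  have hsum : (∑ t ∈ R, (fcr p' t + fcr t p' + fcr q' t + fcr t q'))
      ≤ ∑ t ∈ R, (fcr (a,c) t + fcr t (a,c) + fcr (b,d) t + fcr t (b,d)) := by
    apply Finset.sum_le_sum
    intro r hrR
    have hrm : r ∈ m.arcs := hRsub hrR
    have hrp : r ≠ (a,c) := by
      simp only [hR, Finset.mem_sdiff, Finset.mem_insert, Finset.mem_singleton] at hrR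
      tauto
    have hrq : r ≠ (b,d) := by
      simp only [hR, Finset.mem_sdiff, Finset.mem_insert, Finset.mem_singleton] at hrR
      tauto
    obtain ⟨x, y⟩ := r
    have hxy : x < y := m.arc_lt (x,y) hrm
    have d1 : x ≠ a := fun h => hrp (share (x,y) hrm (a,c) hac x (Or.inl rfl) (Or.inl h))
    have d2 : x ≠ b := fun h => hrq (share (x,y) hrm (b,d) hbd x (Or.inl rfl) (Or.inl h))
    have d3 : x ≠ c := fun h => hrp (share (x,y) hrm (a,c) hac x (Or.inl rfl) (Or.inr h))
    have d4 : x ≠ d := fun h => hrq (share (x,y) hrm (b,d) hbd x (Or.inl rfl) (Or.inr h))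
    have d5 : y ≠ a := fun h => hrp (share (x,y) hrm (a,c) hac y (Or.inr rfl) (Or.inl h))
    have d6 : y ≠ b := fun h => hrq (share (x,y) hrm (b,d) hbd y (Or.inr rfl) (Or.inl h))
    have d7 : y ≠ c := fun h => hrp (share (x,y) hrm (a,c) hac y (Or.inr rfl) (Or.inr h))
    have d8 : y ≠ d := fun h => hrq (share (x,y) hrm (b,d) hbd y (Or.inr rfl) (Or.inr h))
    have := key_cr x y a b c d hxy hab hbc hcd d1 d2 d3 d4 d5 d6 d7 d8 p' q' hpq'
    omega
  have epp : fcr (a,c) (a,c) = 0 := by simp [fcr, Crosses]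
  have eqq : fcr (b,d) (b,d) = 0 := by simp [fcr, Crosses]
  have epq : fcr (a,c) (b,d) = 1 := by simp [fcr, Crosses, hab, hbc, hcd]
  have eqp : fcr (b,d) (a,c) = 0 := by simp only [fcr]; split_ifs <;> simp only [Crosses] at * <;> omega
  have e' : fcr p' p' = 0 ∧ fcr p' q' = 0 ∧ fcr q' p' = 0 ∧ fcr q' q' = 0 := by
    rcases hpq' with ⟨h, h'⟩ | ⟨h, h'⟩ <;> subst h <;> subst h' <;>
      refine ⟨?_, ?_, ?_, ?_⟩ <;> simp only [fcr] <;> split_ifs <;> simp only [Crosses] at * <;> omega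
  obtain ⟨e1, e2, e3, e4⟩ := e'
  rw [hcn m, hcn m', hA, hA', expand_cr (a,c) (b,d) R hpq hpR hqR,
    expand_cr p' q' R hp'q' hp'R hq'R, epp, eqq, epq, eqp, e1, e2, e3, e4]
  linarith [hsum]

/-- A single resolution step strictly decreases the number of crossing pairs. -/
theorem stmt5 (n : ℕ) (hn : 1 ≤ n) (m m' : Matching n) (h : ResStep m m') :
    crossNum m' < crossNum m := by
  obtain ⟨m₁, m₂, ⟨a, b, c, d, hab, hbc, hcd, hac, hbd, h1, h2⟩, hcase⟩ := h
  rcases hcase with rfl | rfl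
  · exact dec_cr m m' a b c d hab hbc hcd hac hbd (a,b) (c,d) (Or.inl ⟨rfl, rfl⟩) h1
  · exact dec_cr m m' a b c d hab hbc hcd hac hbd (a,d) (b,c) (Or.inr ⟨rfl, rfl⟩) h2
end

section
/- Let n ≥ 1, let F be the free ℤ-module on the set of perfect matchings of {1,…,2n}, and let M be the quotient of F by the submodule generated by all elements m − m₁ − m₂, where m ranges over perfect matchings having a crossing pair of arcs {a,c},{b,d} (a<b<c<d) and m₁, m₂ are obtained from m by replacing these two arcs by {a,b},{c,d} and by {a,d},{b,c} respectively. Then for every perfect matching m of {1,…,2n} there exists a function c from noncrossing perfect matchings of {1,…,2n} to the natural numbers such that: (i) in M, the class of m equals the sum over noncrossing matchings u of c(u) times the class of u; (ii) c(u) = 0 unless u is reachable from m by a finite sequence of resolution steps; and (iii) the sum of all values c(u) is at least 1. -/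
/-- The submodule of relations defining `M` as a quotient of the free `ℤ`-module on
perfect matchings: it is spanned by the elements `m - m₁ - m₂` for all resolution
pairs. -/
noncomputable def resolutionRelations (n : ℕ) : Submodule ℤ (Matching n →₀ ℤ) :=
  Submodule.span ℤ {f : Matching n →₀ ℤ | ∃ m m₁ m₂ : Matching n, ResPair m m₁ m₂ ∧
    f = Finsupp.single m 1 - Finsupp.single m₁ 1 - Finsupp.single m₂ 1}

/-! ### Auxiliary development -/

/-- Weight of an arc, used to build a measure that strictly decreases under resolution. -/
def arcW (n : ℕ) (p : ℕ × ℕ) : ℕ :=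
  (p.2 - p.1) * (4 * n ^ 2 + 1) + (4 * n ^ 2 - (p.2 - p.1) ^ 2)

/-- The measure of a matching. -/
def mu (n : ℕ) (m : Matching n) : ℕ := ∑ p ∈ m.arcs, arcW n p

lemma sq_diff_le {n u v : ℕ} (h1 : 1 ≤ u) (h2 : u ≤ v) (h3 : v ≤ 2 * n) :
    (v - u) ^ 2 ≤ 4 * n ^ 2 := by
  have h : v - u < 2 * n := by omega
  have := Nat.pow_lt_pow_left h (n := 2) (by omega)
  nlinarith

lemma arcW_cast (n : ℕ) (p : ℕ × ℕ) (h1 : p.1 ≤ p.2) (h2 : (p.2 - p.1) ^ 2 ≤ 4 * n ^ 2) :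
    (arcW n p : ℤ) = ((p.2 : ℤ) - p.1) * (4 * n ^ 2 + 1) +
      (4 * (n : ℤ) ^ 2 - ((p.2 : ℤ) - p.1) ^ 2) := by
  have e1 : ((p.2 - p.1 : ℕ) : ℤ) = (p.2 : ℤ) - p.1 := by omega
  unfold arcW
  rw [Nat.cast_add, Nat.cast_mul, Nat.cast_sub h2, e1]
  push_cast [e1]
  ring

lemma w_ineq1 {n a b c d : ℕ} (h1 : 1 ≤ a) (hab : a < b) (hbc : b < c) (hcd : c < d)
    (hd : d ≤ 2 * n) :
    arcW n (a, b) + arcW n (c, d) < arcW n (a, c) + arcW n (b, d) := by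
  have key : (arcW n (a, b) : ℤ) + arcW n (c, d) < (arcW n (a, c) : ℤ) + arcW n (b, d) := by
    rw [arcW_cast n (a, b) (by omega) (sq_diff_le h1 (by omega) (by omega)),
       arcW_cast n (c, d) (by omega) (sq_diff_le (by omega) (by omega) (by omega)),
       arcW_cast n (a, c) (by omega) (sq_diff_le h1 (by omega) (by omega)),
       arcW_cast n (b, d) (by omega) (sq_diff_le (by omega) (by omega) (by omega))]
    simp only
    have hca : ((c : ℤ) - a) ^ 2 ≤ 4 * (n : ℤ) ^ 2 := by
      have := sq_diff_le (n := n) h1 (show a ≤ c by omega) (by omega)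
      have e : ((c - a : ℕ) : ℤ) = (c : ℤ) - a := by omega
      calc ((c : ℤ) - a) ^ 2 = ((c - a : ℕ) : ℤ) ^ 2 := by rw [e]
        _ ≤ ((4 * n ^ 2 : ℕ) : ℤ) := by exact_mod_cast this
        _ = 4 * (n : ℤ) ^ 2 := by push_cast; ring
    have hdb : ((d : ℤ) - b) ^ 2 ≤ 4 * (n : ℤ) ^ 2 := by
      have := sq_diff_le (n := n) (show 1 ≤ b by omega) (show b ≤ d by omega) hd
      have e : ((d - b : ℕ) : ℤ) = (d : ℤ) - b := by omega
      calc ((d : ℤ) - b) ^ 2 = ((d - b : ℕ) : ℤ) ^ 2 := by rw [e]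
        _ ≤ ((4 * n ^ 2 : ℕ) : ℤ) := by exact_mod_cast this
        _ = 4 * (n : ℤ) ^ 2 := by push_cast; ring
    have hcb : (1 : ℤ) ≤ (c : ℤ) - b := by omega
    nlinarith [sq_nonneg ((b : ℤ) - a), sq_nonneg ((d : ℤ) - c),
      mul_nonneg (show (0 : ℤ) ≤ (c : ℤ) - b - 1 by linarith)
        (show (0 : ℤ) ≤ 4 * (n : ℤ) ^ 2 + 1 by positivity)]
  exact_mod_cast key

lemma w_ineq2 {n a b c d : ℕ} (h1 : 1 ≤ a) (hab : a < b) (hbc : b < c) (hcd : c < d)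
    (hd : d ≤ 2 * n) :
    arcW n (a, d) + arcW n (b, c) < arcW n (a, c) + arcW n (b, d) := by
  have key : (arcW n (a, d) : ℤ) + arcW n (b, c) < (arcW n (a, c) : ℤ) + arcW n (b, d) := by
    rw [arcW_cast n (a, d) (by omega) (sq_diff_le h1 (by omega) (by omega)),
       arcW_cast n (b, c) (by omega) (sq_diff_le (by omega) (by omega) (by omega)),
       arcW_cast n (a, c) (by omega) (sq_diff_le h1 (by omega) (by omega)),
       arcW_cast n (b, d) (by omega) (sq_diff_le (by omega) (by omega) (by omega))]
    simp only
    have hba : (0 : ℤ) < (b : ℤ) - a := by omega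
    have hdc : (0 : ℤ) < (d : ℤ) - c := by omega
    nlinarith [mul_pos hba hdc]
  exact_mod_cast key

/-- Two arcs of a matching sharing an endpoint are equal. -/
lemma eq_of_shared {n : ℕ} (m : Matching n) {p q : ℕ × ℕ} (hp : p ∈ m.arcs)
    (hq : q ∈ m.arcs) (k : ℕ) (hkp : k = p.1 ∨ k = p.2) (hkq : k = q.1 ∨ k = q.2) :
    p = q := by
  have hk : k ∈ Finset.Icc 1 (2 * n) := by
    rcases hkp with h | h
    · exact h ▸ (m.arc_mem p hp).1
    · exact h ▸ (m.arc_mem p hp).2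
  obtain ⟨r, _, hu⟩ := m.cover k hk
  rw [hu p ⟨hp, hkp⟩, hu q ⟨hq, hkq⟩]

/-- Replacing two arcs by a re-pairing of the same four endpoints yields a matching. -/
lemma exists_replace {n : ℕ} (m : Matching n) (ac bd e f : ℕ × ℕ)
    (hac : ac ∈ m.arcs) (hbd : bd ∈ m.arcs)
    (he : e.1 < e.2) (hf : f.1 < f.2)
    (hept : ∀ k : ℕ, ((k = e.1 ∨ k = e.2) ∨ (k = f.1 ∨ k = f.2)) ↔
      ((k = ac.1 ∨ k = ac.2) ∨ (k = bd.1 ∨ k = bd.2)))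
    (hdisj : ∀ k : ℕ, (k = e.1 ∨ k = e.2) → (k = f.1 ∨ k = f.2) → False) :
    ∃ m' : Matching n, m'.arcs = (m.arcs \ {ac, bd}) ∪ {e, f} := by
  classical
  have hmem : ∀ k : ℕ, ((k = e.1 ∨ k = e.2) ∨ (k = f.1 ∨ k = f.2)) →
      k ∈ Finset.Icc 1 (2 * n) := by
    intro k hk
    rcases (hept k).mp hk with h | h
    · rcases h with h | h
      · exact h ▸ (m.arc_mem ac hac).1
      · exact h ▸ (m.arc_mem ac hac).2
    · rcases h with h | h
      · exact h ▸ (m.arc_mem bd hbd).1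
      · exact h ▸ (m.arc_mem bd hbd).2
  refine ⟨⟨(m.arcs \ {ac, bd}) ∪ {e, f}, ?_, ?_, ?_⟩, rfl⟩
  · intro p hp
    rcases Finset.mem_union.mp hp with h | h
    · exact m.arc_lt p (Finset.mem_sdiff.mp h).1
    · rcases Finset.mem_insert.mp h with h | h
      · exact h ▸ he
      · rw [Finset.mem_singleton] at h; exact h ▸ hf
  · intro p hp
    rcases Finset.mem_union.mp hp with h | h
    · exact m.arc_mem p (Finset.mem_sdiff.mp h).1
    · rcases Finset.mem_insert.mp h with h | h
      · subst h
        exact ⟨hmem _ (Or.inl (Or.inl rfl)), hmem _ (Or.inl (Or.inr rfl))⟩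
      · rw [Finset.mem_singleton] at h; subst h
        exact ⟨hmem _ (Or.inr (Or.inl rfl)), hmem _ (Or.inr (Or.inr rfl))⟩
  · intro k hk
    obtain ⟨p, hp, hpu⟩ := m.cover k hk
    by_cases hke : k = e.1 ∨ k = e.2
    · refine ⟨e, ⟨Finset.mem_union_right _ (Finset.mem_insert_self _ _), hke⟩, ?_⟩
      rintro q ⟨hq, hqk⟩
      rcases Finset.mem_union.mp hq with h | h
      · exfalso
        obtain ⟨hqA, hqS⟩ := Finset.mem_sdiff.mp h
        have hq_eq : q = p := hpu q ⟨hqA, hqk⟩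
        rcases (hept k).mp (Or.inl hke) with h' | h'
        · have hap : ac = p := hpu ac ⟨hac, h'⟩
          exact hqS (by rw [hq_eq, ← hap]; exact Finset.mem_insert_self _ _)
        · have hbp : bd = p := hpu bd ⟨hbd, h'⟩
          exact hqS (by rw [hq_eq, ← hbp]; simp)
      · rcases Finset.mem_insert.mp h with h | h
        · exact h
        · rw [Finset.mem_singleton] at h
          exact absurd (hdisj k hke (h ▸ hqk)) not_false
    · by_cases hkf : k = f.1 ∨ k = f.2
      · refine ⟨f, ⟨Finset.mem_union_right _ (by simp), hkf⟩, ?_⟩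
        rintro q ⟨hq, hqk⟩
        rcases Finset.mem_union.mp hq with h | h
        · exfalso
          obtain ⟨hqA, hqS⟩ := Finset.mem_sdiff.mp h
          have hq_eq : q = p := hpu q ⟨hqA, hqk⟩
          rcases (hept k).mp (Or.inr hkf) with h' | h'
          · have hap : ac = p := hpu ac ⟨hac, h'⟩
            exact hqS (by rw [hq_eq, ← hap]; exact Finset.mem_insert_self _ _)
          · have hbp : bd = p := hpu bd ⟨hbd, h'⟩
            exact hqS (by rw [hq_eq, ← hbp]; simp)
        · rcases Finset.mem_insert.mp h with h | h
          · exact absurd (hdisj k (h ▸ hqk) hkf) not_false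
          · rw [Finset.mem_singleton] at h; exact h
      · have hnacbd : ¬ ((k = ac.1 ∨ k = ac.2) ∨ (k = bd.1 ∨ k = bd.2)) := by
          intro h
          have := (hept k).mpr h
          tauto
        refine ⟨p, ⟨Finset.mem_union_left _ (Finset.mem_sdiff.mpr ⟨hp.1, ?_⟩), hp.2⟩, ?_⟩
        · intro hmemS
          rcases Finset.mem_insert.mp hmemS with h | h
          · exact hnacbd (Or.inl (h ▸ hp.2))
          · rw [Finset.mem_singleton] at h; exact hnacbd (Or.inr (h ▸ hp.2))
        · rintro q ⟨hq, hqk⟩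
          rcases Finset.mem_union.mp hq with h | h
          · exact hpu q ⟨(Finset.mem_sdiff.mp h).1, hqk⟩
          · exfalso
            rcases Finset.mem_insert.mp h with h | h
            · exact hke (h ▸ hqk)
            · rw [Finset.mem_singleton] at h; exact hkf (h ▸ hqk)

/-- The integer combination attached to a natural coefficient function. -/
noncomputable def toInt (n : ℕ) (c : Matching n →₀ ℕ) : Matching n →₀ ℤ :=
  ∑ u ∈ c.support, (c u : ℤ) • Finsupp.single u (1 : ℤ)

lemma toInt_sum (n : ℕ) (c : Matching n →₀ ℕ) :
    toInt n c = c.sum (fun u x => (x : ℤ) • Finsupp.single u (1 : ℤ)) := rfl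

lemma toInt_add (n : ℕ) (c₁ c₂ : Matching n →₀ ℕ) :
    toInt n (c₁ + c₂) = toInt n c₁ + toInt n c₂ := by
  rw [toInt_sum, toInt_sum, toInt_sum]
  apply Finsupp.sum_add_index'
  · intro a; simp
  · intro a b₁ b₂; push_cast; rw [add_smul]

lemma valsum_add (n : ℕ) (c₁ c₂ : Matching n →₀ ℕ) :
    ∑ u ∈ (c₁ + c₂).support, (c₁ + c₂) u =
      (∑ u ∈ c₁.support, c₁ u) + ∑ u ∈ c₂.support, c₂ u := by
  have h : ∀ c : Matching n →₀ ℕ, (∑ u ∈ c.support, c u) = c.sum (fun _ x => x) :=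
    fun c => rfl
  rw [h, h, h]
  exact Finsupp.sum_add_index' (h := fun _ x => x) (fun _ => rfl) (fun _ _ _ => rfl)

/-- Main induction. -/
lemma main_aux (n : ℕ) : ∀ N : ℕ, ∀ m : Matching n, mu n m < N →
    ∃ c : Matching n →₀ ℕ, (∀ u ∈ c.support, Noncrossing u) ∧
      (∀ u : Matching n, ¬ Reachable m u → c u = 0) ∧
      1 ≤ ∑ u ∈ c.support, c u ∧
      (Finsupp.single m (1 : ℤ) - ∑ u ∈ c.support, (c u : ℤ) • Finsupp.single u (1 : ℤ))
        ∈ resolutionRelations n := by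
  classical
  intro N
  induction N with
  | zero => intro m h; omega
  | succ N ih =>
    intro m hm
    by_cases hnc : Noncrossing m
    · refine ⟨Finsupp.single m 1, ?_, ?_, ?_, ?_⟩
      · intro u hu
        have : u = m := by
          by_contra hne
          simp [Finsupp.support_single_ne_zero m one_ne_zero, hne] at hu
        exact this ▸ hnc
      · intro u hu
        have hne : u ≠ m := by
          intro h; exact hu (h ▸ Relation.ReflTransGen.refl)
        simp [Finsupp.single_apply, (Ne.symm hne)]
      · simp [Finsupp.support_single_ne_zero m one_ne_zero]
      · simp [Finsupp.support_single_ne_zero m one_ne_zero]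
    · -- there is a crossing
      rw [Noncrossing] at hnc
      push_neg at hnc
      obtain ⟨p, hp, q, hq, hcr⟩ := hnc
      obtain ⟨hab, hbc, hcd⟩ := hcr
      set a := p.1 with ha'
      set c := p.2 with hc'
      set b := q.1 with hb'
      set d := q.2 with hd'
      have hacm : (a, c) ∈ m.arcs := by rwa [ha', hc', Prod.mk.eta]
      have hbdm : (b, d) ∈ m.arcs := by rwa [hb', hd', Prod.mk.eta]
      have h1a : 1 ≤ a := (Finset.mem_Icc.mp (m.arc_mem _ hacm).1).1
      have hd2n : d ≤ 2 * n := (Finset.mem_Icc.mp (m.arc_mem _ hbdm).2).2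
      -- construct the two resolutions
      obtain ⟨m₁, hm₁⟩ := exists_replace m (a, c) (b, d) (a, b) (c, d) hacm hbdm
        (by simpa using hab) (by simpa using hcd)
        (by intro k; simp only; omega) (by intro k; simp only; omega)
      obtain ⟨m₂, hm₂⟩ := exists_replace m (a, c) (b, d) (a, d) (b, c) hacm hbdm
        (by simp only; omega) (by simpa using hbc)
        (by intro k; simp only; omega) (by intro k; simp only; omega)
      have hRP : ResPair m m₁ m₂ := ⟨a, b, c, d, hab, hbc, hcd, hacm, hbdm, hm₁, hm₂⟩
      -- arcs not in m
      have hnotmem : ∀ x y : ℕ × ℕ, x ∈ m.arcs → (x.1 = y.1 ∧ x.2 ≠ y.2 ∨ x.2 = y.2 ∧ x.1 ≠ y.1) →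
          y ∉ m.arcs := by
        intro x y hx hxy hy
        rcases hxy with ⟨h1, h2⟩ | ⟨h1, h2⟩
        · exact h2 (congrArg Prod.snd (eq_of_shared m hx hy x.1 (Or.inl rfl) (Or.inl h1)))
        · exact h2 (congrArg Prod.fst (eq_of_shared m hx hy x.2 (Or.inr rfl) (Or.inr h1)))
      have hab_nm : (a, b) ∉ m.arcs :=
        hnotmem (a, c) (a, b) hacm (Or.inl ⟨rfl, by simp; omega⟩)
      have hcd_nm : (c, d) ∉ m.arcs :=
        hnotmem (b, d) (c, d) hbdm (Or.inr ⟨rfl, by simp; omega⟩)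
      have had_nm : (a, d) ∉ m.arcs :=
        hnotmem (a, c) (a, d) hacm (Or.inl ⟨rfl, by simp; omega⟩)
      have hbc_nm : (b, c) ∉ m.arcs :=
        hnotmem (b, d) (b, c) hbdm (Or.inl ⟨rfl, by simp; omega⟩)
      have hSsub : ({(a, c), (b, d)} : Finset (ℕ × ℕ)) ⊆ m.arcs := by
        intro x hx
        rcases Finset.mem_insert.mp hx with h | h
        · exact h ▸ hacm
        · rw [Finset.mem_singleton] at h; exact h ▸ hbdm
      have hsplit : mu n m = (∑ x ∈ m.arcs \ {(a, c), (b, d)}, arcW n x)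
          + (arcW n (a, c) + arcW n (b, d)) := by
        rw [mu, ← Finset.sum_sdiff hSsub]
        congr 1
        rw [Finset.sum_pair (by simp; omega)]
      have hmu : ∀ (mm : Matching n) (e f : ℕ × ℕ),
          mm.arcs = (m.arcs \ {(a, c), (b, d)}) ∪ {e, f} → e ∉ m.arcs → f ∉ m.arcs → e ≠ f →
          mu n mm = (∑ x ∈ m.arcs \ {(a, c), (b, d)}, arcW n x) + (arcW n e + arcW n f) := by
        intro mm e f harcs hen hfn hef
        rw [mu, harcs, Finset.sum_union, Finset.sum_pair hef]
        rw [Finset.disjoint_right]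
        intro x hx hx'
        have hxA : x ∈ m.arcs := (Finset.mem_sdiff.mp hx').1
        rcases Finset.mem_insert.mp hx with h | h
        · exact hen (h ▸ hxA)
        · rw [Finset.mem_singleton] at h; exact hfn (h ▸ hxA)
      have hmu₁ : mu n m₁ < mu n m := by
        rw [hmu m₁ (a, b) (c, d) hm₁ hab_nm hcd_nm (by simp; omega), hsplit]
        have := w_ineq1 (n := n) h1a hab hbc hcd hd2n
        omega
      have hmu₂ : mu n m₂ < mu n m := by
        rw [hmu m₂ (a, d) (b, c) hm₂ had_nm hbc_nm (by simp; omega), hsplit]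
        have := w_ineq2 (n := n) h1a hab hbc hcd hd2n
        omega
      obtain ⟨c₁, hc₁nc, hc₁r, hc₁s, hc₁m⟩ := ih m₁ (by omega)
      obtain ⟨c₂, hc₂nc, hc₂r, hc₂s, hc₂m⟩ := ih m₂ (by omega)
      have hstep₁ : ResStep m m₁ := ⟨m₁, m₂, hRP, Or.inl rfl⟩
      have hstep₂ : ResStep m m₂ := ⟨m₁, m₂, hRP, Or.inr rfl⟩
      refine ⟨c₁ + c₂, ?_, ?_, ?_, ?_⟩
      · intro u hu
        rw [Finsupp.mem_support_iff, Finsupp.add_apply] at hu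
        by_cases h1 : c₁ u = 0
        · exact hc₂nc u (Finsupp.mem_support_iff.mpr (by omega))
        · exact hc₁nc u (Finsupp.mem_support_iff.mpr h1)
      · intro u hu
        have h1 : c₁ u = 0 := hc₁r u (fun hr => hu (Relation.ReflTransGen.head hstep₁ hr))
        have h2 : c₂ u = 0 := hc₂r u (fun hr => hu (Relation.ReflTransGen.head hstep₂ hr))
        simp [Finsupp.add_apply, h1, h2]
      · rw [valsum_add]; omega
      · have hgen : (Finsupp.single m (1 : ℤ) - Finsupp.single m₁ 1 - Finsupp.single m₂ 1)
            ∈ resolutionRelations n :=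
          Submodule.subset_span ⟨m, m₁, m₂, hRP, rfl⟩
        have hsum := add_mem (add_mem hgen hc₁m) hc₂m
        have heq : Finsupp.single m (1 : ℤ) - toInt n (c₁ + c₂) =
            (Finsupp.single m (1 : ℤ) - Finsupp.single m₁ 1 - Finsupp.single m₂ 1)
            + (Finsupp.single m₁ (1 : ℤ) - toInt n c₁)
            + (Finsupp.single m₂ (1 : ℤ) - toInt n c₂) := by
          rw [toInt_add]; abel
        show (Finsupp.single m (1 : ℤ) - toInt n (c₁ + c₂)) ∈ resolutionRelations n
        rw [heq]
        exact hsum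

/-- In `M = F / resolutionRelations n`, the class of any matching `m` is a nonnegative
integer combination of classes of noncrossing matchings, supported on matchings
reachable from `m`, with total coefficient sum at least `1`. -/
theorem stmt6 (n : ℕ) (hn : 1 ≤ n) (m : Matching n) :
    ∃ c : Matching n →₀ ℕ, (∀ u ∈ c.support, Noncrossing u) ∧
      (∀ u : Matching n, ¬ Reachable m u → c u = 0) ∧
      1 ≤ ∑ u ∈ c.support, c u ∧
      (Finsupp.single m (1 : ℤ) - ∑ u ∈ c.support, (c u : ℤ) • Finsupp.single u (1 : ℤ))
        ∈ resolutionRelations n := by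
  exact main_aux n (mu n m + 1) m (Nat.lt_succ_self _)
end

section
/- Let n ≥ 1, let T be a standard Young tableau of shape (n,n), and let w be the unique permutation of {1,…,2n} such that applying w to every entry of T₀ yields T (i.e., w(T₀(c)) = T(c) for every cell c). Then every directed path from T₀ to T in the tableau graph has exactly inv(w) edges, where inv(w) is the number of pairs i < j with w(i) > w(j). In particular, any two directed paths from T₀ to T have the same number of edges. -/
/-- entry of S at the cell where T₀ holds k -/
def val {n : ℕ} (S : SYT n) (k : ℕ) : ℕ :=
  if h : 1 ≤ k ∧ k ≤ 2 * n then
    S.entry ⟨(k - 1) % 2, by omega⟩ ⟨(k - 1) / 2, by omega⟩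
  else k

def invc {n : ℕ} (S : SYT n) : ℕ :=
  ((Finset.Icc 1 (2 * n) ×ˢ Finset.Icc 1 (2 * n)).filter
    (fun p : ℕ × ℕ => p.1 < p.2 ∧ val S p.2 < val S p.1)).card

lemma val_eq {n : ℕ} (S : SYT n) (i : Fin 2) (j : Fin n) :
    val S (2 * (j : ℕ) + 1 + (i : ℕ)) = S.entry i j := by
  have hi : (i : ℕ) < 2 := i.isLt
  have hj : (j : ℕ) < n := j.isLt
  rw [val, dif_pos (by omega)]
  congr 1 <;> apply Fin.ext <;> simp <;> omega

lemma val_inj {n : ℕ} (S : SYT n) {a b : ℕ} (ha : 1 ≤ a ∧ a ≤ 2 * n)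
    (hb : 1 ≤ b ∧ b ≤ 2 * n) (h : val S a = val S b) : a = b := by
  rw [val, dif_pos ha, val, dif_pos hb] at h
  have := S.inj (a₁ := (⟨(a-1)%2, by omega⟩, ⟨(a-1)/2, by omega⟩))
    (a₂ := (⟨(b-1)%2, by omega⟩, ⟨(b-1)/2, by omega⟩)) h
  rw [Prod.ext_iff, Fin.ext_iff, Fin.ext_iff] at this
  simp at this
  omega

lemma edge_invc {n : ℕ} {S T : SYT n} (h : Edge S T) : invc T = invc S + 1 := by
  obtain ⟨i, ⟨j₁, hj₁⟩, ⟨j₂, hj₂⟩, hT⟩ := h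
  have hj : j₁ < j₂ := by
    have h1 := S.col_lt j₁
    have h2 : S.entry 0 j₁ < S.entry 0 j₂ := by omega
    exact (S.row_mono 0).lt_iff_lt.mp h2
  set a₀ := 2 * (j₁ : ℕ) + 2 with ha₀def
  set b₀ := 2 * (j₂ : ℕ) + 1 with hb₀def
  have hj₁n : (j₁ : ℕ) < n := j₁.isLt
  have hj₂n : (j₂ : ℕ) < n := j₂.isLt
  have hva : val S a₀ = i := by
    rw [ha₀def, show 2*(j₁:ℕ)+2 = 2*(j₁:ℕ)+1+((1:Fin 2):ℕ) by simp, val_eq, hj₁]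
  have hvb : val S b₀ = i + 1 := by
    rw [hb₀def, show 2*(j₂:ℕ)+1 = 2*(j₂:ℕ)+1+((0:Fin 2):ℕ) by simp, val_eq, hj₂]
  have hab : a₀ < b₀ := by omega
  have ha₀m : 1 ≤ a₀ ∧ a₀ ≤ 2 * n := by omega
  have hb₀m : 1 ≤ b₀ ∧ b₀ ≤ 2 * n := by omega
  have hvT : ∀ k, 1 ≤ k → k ≤ 2 * n →
      val T k = if val S k = i then i + 1 else if val S k = i + 1 then i else val S k := by
    intro k h1 h2
    rw [val, dif_pos ⟨h1, h2⟩, val, dif_pos ⟨h1, h2⟩, hT]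
  have key : (Finset.Icc 1 (2 * n) ×ˢ Finset.Icc 1 (2 * n)).filter
      (fun p : ℕ × ℕ => p.1 < p.2 ∧ val T p.2 < val T p.1) =
      insert (a₀, b₀) ((Finset.Icc 1 (2 * n) ×ˢ Finset.Icc 1 (2 * n)).filter
      (fun p : ℕ × ℕ => p.1 < p.2 ∧ val S p.2 < val S p.1)) := by
    ext ⟨a, b⟩
    simp only [Finset.mem_filter, Finset.mem_insert, Finset.mem_product, Finset.mem_Icc,
      Prod.mk.injEq]
    by_cases hP : (1 ≤ a ∧ a ≤ 2 * n) ∧ (1 ≤ b ∧ b ≤ 2 * n)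
    · obtain ⟨ha, hb⟩ := hP
      rw [hvT a ha.1 ha.2, hvT b hb.1 hb.2]
      have hxa : val S a = i ↔ a = a₀ :=
        ⟨fun h => val_inj S ha ha₀m (h.trans hva.symm), fun h => h ▸ hva⟩
      have hxa1 : val S a = i + 1 ↔ a = b₀ :=
        ⟨fun h => val_inj S ha hb₀m (h.trans hvb.symm), fun h => h ▸ hvb⟩
      have hyb : val S b = i ↔ b = a₀ :=
        ⟨fun h => val_inj S hb ha₀m (h.trans hva.symm), fun h => h ▸ hva⟩
      have hyb1 : val S b = i + 1 ↔ b = b₀ :=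
        ⟨fun h => val_inj S hb hb₀m (h.trans hvb.symm), fun h => h ▸ hvb⟩
      obtain ⟨x, hx⟩ : ∃ x, val S a = x := ⟨_, rfl⟩
      obtain ⟨y, hy⟩ : ∃ y, val S b = y := ⟨_, rfl⟩
      rw [hx] at hxa hxa1
      rw [hy] at hyb hyb1
      rw [hx, hy]
      split_ifs <;> omega
    · obtain ⟨x, hx⟩ : ∃ x, val T a = x := ⟨_, rfl⟩
      obtain ⟨y, hy⟩ : ∃ y, val T b = y := ⟨_, rfl⟩
      obtain ⟨x', hx'⟩ : ∃ x, val S a = x := ⟨_, rfl⟩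
      obtain ⟨y', hy'⟩ : ∃ y, val S b = y := ⟨_, rfl⟩
      rw [hx, hy, hx', hy']
      omega
  rw [invc, invc, key, Finset.card_insert_of_notMem]
  simp only [Finset.mem_filter]
  rintro ⟨-, -, hlt⟩
  omega

lemma chain_invc {n : ℕ} : ∀ (L : List (SYT n)) (S : SYT n), List.Chain Edge S L →
    invc ((S :: L).getLast (List.cons_ne_nil _ _)) = L.length + invc S := by
  intro L
  induction L with
  | nil => intro S _; simp
  | cons S' L' ih =>
    intro S hc
    unfold List.Chain at hc
    rw [List.chain_cons] at hc
    have h1 := ih S' hc.2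
    have h2 := edge_invc hc.1
    rw [List.getLast_cons (by simp)]
    simp only [List.length_cons]
    omega

lemma val_T₀ {n : ℕ} (T₀ : SYT n)
    (hT₀ : ∀ (i : Fin 2) (j : Fin n), T₀.entry i j = 2 * (j : ℕ) + 1 + (i : ℕ))
    (k : ℕ) (h1 : 1 ≤ k) (h2 : k ≤ 2 * n) : val T₀ k = k := by
  rw [val, dif_pos ⟨h1, h2⟩, hT₀]
  simp
  omega

/-- Every directed path in the tableau graph from `T₀` (the tableau with `1, …, 2n`
down successive columns) to `T` has exactly `inv(w)` edges, where `w` is the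
permutation of `{1, …, 2n}` carrying `T₀` to `T` entrywise and `inv(w)` is its number
of inversions within `{1, …, 2n}`. -/
theorem stmt7 (n : ℕ) (hn : 1 ≤ n) (T₀ T : SYT n)
    (hT₀ : ∀ (i : Fin 2) (j : Fin n), T₀.entry i j = 2 * (j : ℕ) + 1 + (i : ℕ))
    (w : Equiv.Perm ℕ) (hw : ∀ (i : Fin 2) (j : Fin n), w (T₀.entry i j) = T.entry i j)
    (L : List (SYT n)) (hchain : List.Chain Edge T₀ L)
    (hlast : (T₀ :: L).getLast (List.cons_ne_nil _ _) = T) :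
    L.length = ((Finset.Icc 1 (2 * n) ×ˢ Finset.Icc 1 (2 * n)).filter
      (fun p : ℕ × ℕ => p.1 < p.2 ∧ w p.2 < w p.1)).card := by
  have hval : ∀ k, 1 ≤ k → k ≤ 2 * n → w k = val T k := by
    intro k h1 h2
    have hi : (k - 1) % 2 < 2 := by omega
    have hjn : (k - 1) / 2 < n := by omega
    have hk : 2 * ((⟨(k-1)/2, hjn⟩ : Fin n) : ℕ) + 1 + ((⟨(k-1)%2, hi⟩ : Fin 2) : ℕ) = k := by
      simp; omega
    have h := hw ⟨(k-1)%2, hi⟩ ⟨(k-1)/2, hjn⟩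
    rw [hT₀, hk] at h
    rw [h]
    conv_rhs => rw [← hk]
    rw [val_eq]
  have h0 : invc T₀ = 0 := by
    rw [invc, Finset.card_eq_zero, Finset.filter_eq_empty_iff]
    rintro ⟨a, b⟩ hm
    simp only [Finset.mem_product, Finset.mem_Icc] at hm
    rw [val_T₀ T₀ hT₀ a hm.1.1 hm.1.2, val_T₀ T₀ hT₀ b hm.2.1 hm.2.2]
    omega
  have hc := chain_invc L T₀ hchain
  rw [hlast, h0] at hc
  have hfc : ((Finset.Icc 1 (2 * n) ×ˢ Finset.Icc 1 (2 * n)).filter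
      (fun p : ℕ × ℕ => p.1 < p.2 ∧ w p.2 < w p.1)) =
      ((Finset.Icc 1 (2 * n) ×ˢ Finset.Icc 1 (2 * n)).filter
      (fun p : ℕ × ℕ => p.1 < p.2 ∧ val T p.2 < val T p.1)) := by
    apply Finset.filter_congr
    rintro ⟨a, b⟩ hm
    simp only [Finset.mem_product, Finset.mem_Icc] at hm
    rw [hval a hm.1.1 hm.1.2, hval b hm.2.1 hm.2.2]
  rw [hfc]
  rw [invc] at hc
  omega
end

section
/- Let n ≥ 1 and let T be any standard Young tableau of shape (n,n). Then there exists a directed path in the tableau graph from T₀ to T; that is, T₀ ≤ T in the tableau-graph order. -/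
/-! ### Auxiliary machinery -/

lemma fin2 (p : Fin 2) : p = 0 ∨ p = 1 := by
  fin_cases p
  · exact Or.inl rfl
  · exact Or.inr rfl

lemma SYT.ext' {n : ℕ} {T S : SYT n} (h : T.entry = S.entry) : T = S := by
  cases T; cases S; cases h; rfl

lemma entry_inj {n : ℕ} (T : SYT n) {p p' : Fin 2} {q q' : Fin n}
    (h : T.entry p q = T.entry p' q') : p = p' ∧ q = q' := by
  have h2 := T.inj (a₁ := (p, q)) (a₂ := (p', q')) h
  exact ⟨congrArg Prod.fst h2, congrArg Prod.snd h2⟩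

/-- The transposition of the values `i` and `i+1`. -/
def swp (i v : ℕ) : ℕ := if v = i then i + 1 else if v = i + 1 then i else v

lemma swp_invol (i v : ℕ) : swp i (swp i v) = v := by
  unfold swp; split_ifs <;> omega

/-- If `i` sits in the top row and `i+1` in the bottom row, in different columns,
then `T` has a predecessor in the tableau graph whose top-row sum is one larger. -/
lemma exists_pred {n : ℕ} (T : SYT n) (j k : Fin n) (hjk : j ≠ k)
    (h : T.entry 0 j + 1 = T.entry 1 k) :
    ∃ S : SYT n, Edge S T ∧ (∑ q, S.entry 0 q) = (∑ q, T.entry 0 q) + 1 := by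
  set i := T.entry 0 j with hidef
  have hi1 : T.entry 1 k = i + 1 := h.symm
  have htop : ∀ q, T.entry 0 q = i → q = j := by
    intro q hq
    exact (entry_inj T (hq.trans hidef)).2
  have htop' : ∀ q, T.entry 0 q ≠ i + 1 := by
    intro q hq
    have := (entry_inj T (hq.trans hi1.symm)).1
    simp at this
  have hbot : ∀ q, T.entry 1 q = i + 1 → q = k := by
    intro q hq
    exact (entry_inj T (hq.trans hi1.symm)).2
  have hbot' : ∀ q, T.entry 1 q ≠ i := by
    intro q hq
    have := (entry_inj T (hq.trans hidef)).1
    simp at this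
  have himem := Finset.mem_Icc.mp (T.mem_range 0 j)
  have hi1mem := Finset.mem_Icc.mp (T.mem_range 1 k)
  rw [hi1] at hi1mem
  rw [← hidef] at himem
  refine ⟨⟨fun p q => swp i (T.entry p q), ?_, ?_, ?_, ?_, ?_⟩, ?_, ?_⟩
  · -- mem_range
    intro p q
    have := Finset.mem_Icc.mp (T.mem_range p q)
    simp only [Finset.mem_Icc]
    unfold swp; split_ifs <;> omega
  · -- inj
    intro a b hab
    apply T.inj
    show T.entry a.1 a.2 = T.entry b.1 b.2
    simpa [swp_invol] using congrArg (swp i) hab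
  · -- surj
    intro m hm
    have hm' : swp i m ∈ Finset.Icc 1 (2 * n) := by
      simp only [Finset.mem_Icc] at hm ⊢
      unfold swp; split_ifs <;> omega
    obtain ⟨p, q, hpq⟩ := T.surj _ hm'
    refine ⟨p, q, ?_⟩
    show swp i (T.entry p q) = m
    rw [hpq]; exact swp_invol i m
  · -- row_mono
    intro r
    rcases fin2 r with hr | hr <;> subst hr <;> intro a b hab
    · have hlt := T.row_mono 0 hab
      have h1 := htop' a
      have h2 := htop' b
      show swp i (T.entry 0 a) < swp i (T.entry 0 b)
      unfold swp; split_ifs <;> omega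
    · have hlt := T.row_mono 1 hab
      have h1 := hbot' a
      have h2 := hbot' b
      show swp i (T.entry 1 a) < swp i (T.entry 1 b)
      unfold swp; split_ifs <;> omega
  · -- col_lt
    intro q
    have hcl := T.col_lt q
    have h1 := htop' q
    have h2 := hbot' q
    have h4 : T.entry 0 q ≠ i ∨ T.entry 1 q ≠ i + 1 := by
      by_cases h0 : T.entry 0 q = i
      · exact Or.inr (fun hb => hjk ((htop q h0).symm.trans (hbot q hb)))
      · exact Or.inl h0
    show swp i (T.entry 0 q) < swp i (T.entry 1 q)
    rcases h4 with h4 | h4 <;> unfold swp <;> split_ifs <;> omega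
  · -- Edge
    refine ⟨i, ⟨k, ?_⟩, ⟨j, ?_⟩, ?_⟩
    · show swp i (T.entry 1 k) = i
      rw [hi1]; unfold swp; split_ifs <;> omega
    · show swp i (T.entry 0 j) = i + 1
      rw [← hidef]; unfold swp; split_ifs <;> omega
    · intro p q
      show T.entry p q = swp i (swp i (T.entry p q))
      rw [swp_invol]
  · -- top-row sum increases by one
    have hpoint : ∀ q : Fin n, swp i (T.entry 0 q)
        = T.entry 0 q + (if q = j then 1 else 0) := by
      intro q
      by_cases hq : q = j
      · subst hq
        simp [swp, ← hidef]
      · have h1 : T.entry 0 q ≠ i := fun hh => hq (htop q hh)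
        simp [swp, h1, htop' q, hq]
    show (∑ q, swp i (T.entry 0 q)) = (∑ q, T.entry 0 q) + 1
    rw [Finset.sum_congr rfl (fun q _ => hpoint q), Finset.sum_add_distrib,
      Finset.sum_ite_eq' Finset.univ j (fun _ => 1)]
    simp

/-- If every top entry `i` with `i+1` in the bottom row lies in the same column as
`i+1`, the tableau is the column-superstandard tableau `T₀`. -/
lemma determined {n : ℕ} (T : SYT n)
    (H : ∀ j k : Fin n, T.entry 0 j + 1 = T.entry 1 k → j = k) (j : Fin n) :
    T.entry 0 j = 2 * (j : ℕ) + 1 ∧ T.entry 1 j = 2 * (j : ℕ) + 2 := by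
  have main : ∀ m : ℕ, ∀ j : Fin n, (j : ℕ) = m →
      T.entry 0 j = 2 * (j : ℕ) + 1 ∧ T.entry 1 j = 2 * (j : ℕ) + 2 := by
    intro m
    induction m using Nat.strong_induction_on with
    | _ m IH =>
      intro j hj
      have IH' : ∀ k : Fin n, (k : ℕ) < (j : ℕ) →
          T.entry 0 k = 2 * (k : ℕ) + 1 ∧ T.entry 1 k = 2 * (k : ℕ) + 2 :=
        fun k hk => IH (k : ℕ) (hj ▸ hk) k rfl
      -- any cell with value ≤ 2j lies in a column < j
      have hsmall : ∀ (p : Fin 2) (q : Fin n),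
          T.entry p q ≤ 2 * (j : ℕ) → (q : ℕ) < (j : ℕ) := by
        intro p q hv
        by_contra hq
        push_neg at hq
        have hv1 : 1 ≤ T.entry p q := (Finset.mem_Icc.mp (T.mem_range p q)).1
        set v := T.entry p q with hvdef
        have hc : (v - 1) / 2 < (j : ℕ) := by omega
        have hcn : (v - 1) / 2 < n := lt_of_lt_of_le hc (le_of_lt j.isLt)
        have hr : (v - 1) % 2 < 2 := Nat.mod_lt _ (by omega)
        set cF : Fin n := ⟨(v - 1) / 2, hcn⟩ with hcF
        have hcv : (cF : ℕ) = (v - 1) / 2 := rfl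
        obtain ⟨hA, hB⟩ := IH' cF hc
        have hval : T.entry ⟨(v - 1) % 2, hr⟩ cF = v := by
          rcases (by omega : (v - 1) % 2 = 0 ∨ (v - 1) % 2 = 1) with h0 | h0
          · have he : (⟨(v - 1) % 2, hr⟩ : Fin 2) = 0 := Fin.ext (by simp [h0])
            rw [he, hA]
            omega
          · have he : (⟨(v - 1) % 2, hr⟩ : Fin 2) = 1 := Fin.ext (by simp [h0])
            rw [he, hB]
            omega
        have hq2 := (entry_inj T (hvdef.trans hval.symm)).2
        rw [hq2] at hq
        omega
      have hlow : ∀ (p : Fin 2) (q : Fin n), (j : ℕ) ≤ (q : ℕ) →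
          2 * (j : ℕ) + 1 ≤ T.entry p q := by
        intro p q hq
        by_contra hlt
        push_neg at hlt
        exact absurd (hsmall p q (by omega)) (by omega)
      have htj : T.entry 0 j = 2 * (j : ℕ) + 1 := by
        have h1 : 2 * (j : ℕ) + 1 ≤ T.entry 0 j := hlow 0 j le_rfl
        have hm : 2 * (j : ℕ) + 1 ∈ Finset.Icc 1 (2 * n) := by
          have := j.isLt
          simp only [Finset.mem_Icc]
          omega
        obtain ⟨p, q, hpq⟩ := T.surj _ hm
        have hqj : (j : ℕ) ≤ (q : ℕ) := by
          by_contra hq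
          push_neg at hq
          obtain ⟨h2a, h2b⟩ := IH' q hq
          rcases fin2 p with hp | hp <;> subst hp <;> omega
        rcases fin2 p with hp | hp <;> subst hp
        · have hmono : T.entry 0 j ≤ T.entry 0 q :=
            (T.row_mono 0).le_iff_le.mpr (Fin.le_def.mpr hqj)
          omega
        · have hc := T.col_lt q
          have hl := hlow 0 q hqj
          omega
      have hbj : T.entry 1 j = 2 * (j : ℕ) + 2 := by
        by_contra hb
        have hcl := T.col_lt j
        set b := T.entry 1 j with hbdef
        have hb3 : 2 * (j : ℕ) + 3 ≤ b := by omega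
        have hbm := Finset.mem_Icc.mp (T.mem_range 1 j)
        rw [← hbdef] at hbm
        have hm : b - 1 ∈ Finset.Icc 1 (2 * n) := by
          simp only [Finset.mem_Icc]
          omega
        obtain ⟨p, q, hpq⟩ := T.surj _ hm
        have hqj : (j : ℕ) ≤ (q : ℕ) := by
          by_contra hq
          push_neg at hq
          obtain ⟨h2a, h2b⟩ := IH' q hq
          rcases fin2 p with hp | hp <;> subst hp <;> omega
        rcases fin2 p with hp | hp <;> subst hp
        · have hq : q = j := H q j (by omega)
          subst hq
          omega
        · have hlt : (q : ℕ) < (j : ℕ) := by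
            by_contra hh
            push_neg at hh
            have := (T.row_mono 1).le_iff_le.mpr (Fin.le_def.mpr hh)
            omega
          omega
      exact ⟨htj, hbj⟩
  exact main (j : ℕ) j rfl

/-- Every standard Young tableau of shape `(n,n)` is reachable from `T₀` (the tableau
with `1, …, 2n` down successive columns) by a directed path in the tableau graph. -/
theorem stmt8 (n : ℕ) (hn : 1 ≤ n) (T₀ T : SYT n)
    (hT₀ : ∀ (i : Fin 2) (j : Fin n), T₀.entry i j = 2 * (j : ℕ) + 1 + (i : ℕ)) :
    TabLE T₀ T := by
  have sumbound : ∀ T' : SYT n, (∑ q, T'.entry 0 q) ≤ 2 * n * n := by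
    intro T'
    calc (∑ q, T'.entry 0 q) ≤ ∑ _q : Fin n, 2 * n :=
          Finset.sum_le_sum fun q _ => (Finset.mem_Icc.mp (T'.mem_range 0 q)).2
      _ = 2 * n * n := by simp [Finset.sum_const, Finset.card_univ, Nat.mul_comm]
  suffices h : ∀ (N : ℕ) (T' : SYT n),
      2 * n * n + 1 - (∑ q, T'.entry 0 q) ≤ N → TabLE T₀ T' by
    exact h _ T le_rfl
  intro N
  induction N with
  | zero =>
    intro T' hT'
    have := sumbound T'
    omega
  | succ N IHN =>
    intro T' hT'
    by_cases hP : ∀ j k : Fin n, T'.entry 0 j + 1 = T'.entry 1 k → j = k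
    · have hdet := determined T' hP
      have heq : T₀ = T' := SYT.ext' (by
        funext p q
        rw [hT₀ p q]
        rcases fin2 p with hp | hp <;> subst hp
        · have := (hdet q).1
          have h0 : ((0 : Fin 2) : ℕ) = 0 := rfl
          omega
        · have := (hdet q).2
          have h1 : ((1 : Fin 2) : ℕ) = 1 := rfl
          omega)
      rw [← heq]
      exact Relation.ReflTransGen.refl
    · push_neg at hP
      obtain ⟨j, k, hjk1, hjk2⟩ := hP
      obtain ⟨S, hSE, hSsum⟩ := exists_pred T' j k hjk2 hjk1
      have hS : TabLE T₀ S := IHN S (by omega)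
      exact hS.tail hSE
end
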